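/- Let A be a real normal n×n matrix with n ≥ 3, and let λ and μ be two distinct (complex) eigenvalues of A. Then there exists i ∈ [n] such that |μ − a_{i,i}| ≤ r_i + √n·|λ − μ| (and by symmetry both λ and μ lie in the disk D(a_{i,i}, r_i + √n·|λ − μ|)). -/

import Mathlib

open Matrix Finset

private lemma conj_dot {m : ℕ} (x : Fin m → ℂ) :
    dotProduct (star x) x = ((∑ j, Complex.normSq (x j) : ℝ) : ℂ) := by
  simp only [dotProduct, Pi.star_apply, Complex.ofReal_sum]
  refine Finset.sum_congr rfl fun j _ => ?_
  rw [mul_comm]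
  exact Complex.mul_conj (x j)

private lemma normSq_sum_pos {m : ℕ} {x : Fin m → ℂ} (hx : x ≠ 0) :
    0 < ∑ j, Complex.normSq (x j) := by
  rcases (Finset.sum_nonneg (fun j _ => Complex.normSq_nonneg (x j))).lt_or_eq with h | h
  · exact h
  · exfalso
    apply hx
    funext j
    have := (Finset.sum_eq_zero_iff_of_nonneg
      (fun j _ => Complex.normSq_nonneg (x j))).mp h.symm j (Finset.mem_univ j)
    exact Complex.normSq_eq_zero.mp this

private lemma gersh_aux (n : ℕ) (hn : 0 < n) (A : Matrix (Fin n) (Fin n) ℝ) (lam mu : ℂ)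
    (v u : Fin n → ℂ) (α : ℂ)
    (hu : u ≠ 0)
    (hsum : ∑ j, u j = 0)
    (hrow : ∀ i, ∑ j, (A i j : ℂ) * u j = mu * u i + (α * (lam - mu)) * v i)
    (hp : (‖α‖)^2 * (∑ j, Complex.normSq (v j)) ≤ ∑ j, Complex.normSq (u j)) :
    ∃ i : Fin n, ∀ x : ℝ,
      ‖mu - (A i i : ℂ)‖ ≤
        |x| + (∑ j ∈ Finset.univ.erase i, |A i j - x|) + Real.sqrt n * ‖lam - mu‖ := by
  haveI : Nonempty (Fin n) := Fin.pos_iff_nonempty.mp hn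
  obtain ⟨i, -, hi⟩ := Finset.exists_max_image Finset.univ (fun j => ‖u j‖)
    Finset.univ_nonempty
  have hi' : ∀ j, ‖u j‖ ≤ ‖u i‖ := fun j => hi j (Finset.mem_univ j)
  have hui : 0 < ‖u i‖ := by
    obtain ⟨j, hj⟩ := Function.ne_iff.mp hu
    calc (0:ℝ) < ‖u j‖ := by simpa using hj
    _ ≤ _ := hi' j
  have hαv : ‖α‖ * ‖v i‖ ≤ Real.sqrt n * ‖u i‖ := by
    have h1 : (‖α‖ * ‖v i‖)^2 ≤ (Real.sqrt n * ‖u i‖)^2 := by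
      have hvi : Complex.normSq (v i) ≤ ∑ j, Complex.normSq (v j) :=
        Finset.single_le_sum (fun j _ => Complex.normSq_nonneg (v j)) (Finset.mem_univ i)
      have hnu : (∑ j, Complex.normSq (u j)) ≤ n * Complex.normSq (u i) := by
        calc (∑ j, Complex.normSq (u j)) ≤ ∑ _j : Fin n, Complex.normSq (u i) := by
              refine Finset.sum_le_sum fun j _ => ?_
              rw [← Complex.sq_norm, ← Complex.sq_norm]
              exact pow_le_pow_left₀ (norm_nonneg _) (hi' j) 2
        _ = n * Complex.normSq (u i) := by simp [mul_comm]
      calc (‖α‖ * ‖v i‖)^2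
          = (‖α‖)^2 * Complex.normSq (v i) := by
            rw [mul_pow, Complex.sq_norm (v i)]
        _ ≤ (‖α‖)^2 * (∑ j, Complex.normSq (v j)) :=
              mul_le_mul_of_nonneg_left hvi (sq_nonneg _)
        _ ≤ ∑ j, Complex.normSq (u j) := hp
        _ ≤ n * Complex.normSq (u i) := hnu
        _ = (Real.sqrt n * ‖u i‖)^2 := by
              rw [mul_pow, Complex.sq_norm, Real.sq_sqrt (Nat.cast_nonneg n)]
    have h2 := Real.sqrt_le_sqrt h1
    rwa [Real.sqrt_sq (by positivity), Real.sqrt_sq (by positivity)] at h2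
  refine ⟨i, fun x => ?_⟩
  have e2 : ∑ j ∈ Finset.univ.erase i, u j = - u i := by
    have h := Finset.sum_erase_add Finset.univ u (Finset.mem_univ i)
    rw [hsum] at h
    exact eq_neg_of_add_eq_zero_left h
  have e3 : ∑ j ∈ Finset.univ.erase i, (A i j : ℂ) * u j
      = mu * u i + (α * (lam - mu)) * v i - (A i i : ℂ) * u i := by
    have h := Finset.sum_erase_add Finset.univ (fun j => (A i j : ℂ) * u j) (Finset.mem_univ i)
    rw [hrow i] at h
    linear_combination h
  have h1 : (mu - (A i i : ℂ)) * u i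
      = (∑ j ∈ Finset.univ.erase i, ((A i j - x : ℝ) : ℂ) * u j) - (x : ℂ) * u i
        - (α * (lam - mu)) * v i := by
    have e1 : ∑ j ∈ Finset.univ.erase i, ((A i j - x : ℝ) : ℂ) * u j
        = (∑ j ∈ Finset.univ.erase i, (A i j : ℂ) * u j)
          - (x : ℂ) * ∑ j ∈ Finset.univ.erase i, u j := by
      rw [Finset.mul_sum, ← Finset.sum_sub_distrib]
      refine Finset.sum_congr rfl fun j _ => ?_
      push_cast
      ring
    rw [e1, e2, e3]
    ring
  have h2 : ‖mu - (A i i : ℂ)‖ * ‖u i‖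
      ≤ (|x| + (∑ j ∈ Finset.univ.erase i, |A i j - x|)
          + Real.sqrt n * ‖lam - mu‖) * ‖u i‖ := by
    rw [← norm_mul, h1]
    calc ‖_‖
        ≤ ‖(∑ j ∈ Finset.univ.erase i, ((A i j - x : ℝ) : ℂ) * u j) - (x:ℂ) * u i‖
          + ‖(α * (lam - mu)) * v i‖ := norm_sub_le _ _
      _ ≤ ‖∑ j ∈ Finset.univ.erase i, ((A i j - x : ℝ) : ℂ) * u j‖
          + ‖(x:ℂ) * u i‖ + ‖(α * (lam - mu)) * v i‖ := by
            have := norm_sub_le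
              (∑ j ∈ Finset.univ.erase i, ((A i j - x : ℝ) : ℂ) * u j) ((x:ℂ) * u i)
            linarith
      _ ≤ (∑ j ∈ Finset.univ.erase i, |A i j - x| * ‖u i‖)
          + |x| * ‖u i‖
          + (Real.sqrt n * ‖lam - mu‖) * ‖u i‖ := by
            gcongr ?_ + ?_ + ?_
            · refine le_trans (norm_sum_le _ _) (Finset.sum_le_sum fun j _ => ?_)
              rw [norm_mul, Complex.norm_real, Real.norm_eq_abs]
              exact mul_le_mul_of_nonneg_left (hi' j) (abs_nonneg _)
            · rw [norm_mul, Complex.norm_real, Real.norm_eq_abs]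
            · rw [norm_mul, norm_mul]
              calc ‖α‖ * ‖lam - mu‖ * ‖v i‖
                  = (‖α‖ * ‖v i‖) * ‖lam - mu‖ := by ring
                _ ≤ (Real.sqrt n * ‖u i‖) * ‖lam - mu‖ :=
                    mul_le_mul_of_nonneg_right hαv (norm_nonneg _)
                _ = Real.sqrt n * ‖lam - mu‖ * ‖u i‖ := by ring
      _ = _ := by rw [← Finset.sum_mul]; ring
  exact le_of_mul_le_mul_right h2 hui

theorem normal_close_eigenvalues_gershgorin (n : ℕ) (hn : 3 ≤ n)
    (A : Matrix (Fin n) (Fin n) ℝ)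
    (hnormal : A * A.transpose = A.transpose * A)
    (r : Fin n → ℝ)
    (hr : ∀ i : Fin n, r i = sInf (Set.range fun x : ℝ =>
      |x| + ∑ j ∈ Finset.univ.erase i, |A i j - x|))
    (lam mu : ℂ) (hne : lam ≠ mu)
    (v w : Fin n → ℂ) (hv : v ≠ 0) (hw : w ≠ 0)
    (hAv : (A.map (Complex.ofReal ·)).mulVec v = lam • v)
    (hAw : (A.map (Complex.ofReal ·)).mulVec w = mu • w) :
    ∃ i : Fin n,
      ‖mu - (A i i : ℂ)‖ ≤ r i + Real.sqrt n * ‖lam - mu‖ := by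
  set B : Matrix (Fin n) (Fin n) ℂ := A.map (Complex.ofReal ·) with hB
  have hmap : ∀ (M N : Matrix (Fin n) (Fin n) ℝ),
      (M * N).map (Complex.ofReal ·) = M.map (Complex.ofReal ·) * N.map (Complex.ofReal ·) :=
    fun M N => Matrix.map_mul (f := Complex.ofRealHom)
  have hBt : Bᵀ = A.transpose.map (Complex.ofReal ·) := Matrix.transpose_map.symm
  have hBc : B * Bᵀ = Bᵀ * B := by
    rw [hB, hBt, ← hmap, ← hmap, hnormal]
  have hBH : Bᴴ = Bᵀ := by
    ext i j
    simp [hB, Matrix.conjTranspose_apply, Matrix.map_apply, Matrix.transpose_apply]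
  have hBtH : (Bᵀ)ᴴ = B := by
    rw [show (Bᵀ)ᴴ = (Bᴴ)ᵀ from rfl, hBH, Matrix.transpose_transpose]
  -- adjoint eigenvector equation
  have hadj : Bᵀ.mulVec v = (starRingEnd ℂ) lam • v := by
    set y : Fin n → ℂ := Bᵀ.mulVec v - (starRingEnd ℂ) lam • v with hy
    have hystar : star y = Matrix.vecMul (star v) B - lam • star v := by
      rw [hy, star_sub, Matrix.star_mulVec, hBtH, star_smul]
      simp
    have key : ∀ z : Fin n → ℂ, dotProduct (Matrix.vecMul (star v) B) z
        = dotProduct (star v) (B.mulVec z) :=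
      fun z => (Matrix.dotProduct_mulVec (star v) B z).symm
    have hBBt : B.mulVec (Bᵀ.mulVec v) = Bᵀ.mulVec (lam • v) := by
      rw [Matrix.mulVec_mulVec, hBc, ← Matrix.mulVec_mulVec, hAv]
    have h0 : dotProduct (star y) y = 0 := by
      rw [hystar, hy]
      simp only [sub_dotProduct, dotProduct_sub, smul_dotProduct,
        dotProduct_smul, key, hBBt, Matrix.mulVec_smul, hAv, smul_eq_mul]
      ring
    have hy0 : y = 0 := by
      by_contra hyne
      rw [conj_dot y] at h0
      exact absurd (Complex.ofReal_eq_zero.mp h0) (ne_of_gt (normSq_sum_pos hyne))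
    rw [hy] at hy0
    exact sub_eq_zero.mp hy0
  have hvB : Matrix.vecMul (star v) B = lam • star v := by
    have h := congrArg star hadj
    rw [Matrix.star_mulVec, hBtH, star_smul] at h
    simpa using h
  -- orthogonality
  have horth : dotProduct (star v) w = 0 := by
    have h2 : mu * dotProduct (star v) w = lam * dotProduct (star v) w := by
      calc mu * dotProduct (star v) w
          = dotProduct (star v) (mu • w) := by
            rw [dotProduct_smul, smul_eq_mul]
        _ = dotProduct (star v) (B.mulVec w) := by rw [hAw]
        _ = dotProduct (Matrix.vecMul (star v) B) w := Matrix.dotProduct_mulVec _ _ _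
        _ = lam * dotProduct (star v) w := by
            rw [hvB, smul_dotProduct, smul_eq_mul]
    have h3 : (mu - lam) * dotProduct (star v) w = 0 := by linear_combination h2
    rcases mul_eq_zero.mp h3 with h | h
    · exact absurd (by linear_combination -h) hne
    · exact h
  have horth' : dotProduct (star w) v = 0 := by
    have h := congrArg (starRingEnd ℂ) horth
    simp only [dotProduct, map_sum, _root_.map_mul, Pi.star_apply, RingHom.map_zero,
      Complex.conj_conj] at h
    simpa [dotProduct, mul_comm] using h
  -- pointwise row formula
  have hpt : ∀ (z : Fin n → ℂ) i, B.mulVec z i = ∑ j, (A i j : ℂ) * z j := by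
    intro z i
    simp [hB, Matrix.mulVec, dotProduct, Matrix.map_apply]
  have hn0 : 0 < n := by omega
  -- construct the combined eigen-like vector u
  have main : ∃ i : Fin n, ∀ x : ℝ,
      ‖mu - (A i i : ℂ)‖ ≤
        |x| + (∑ j ∈ Finset.univ.erase i, |A i j - x|)
          + Real.sqrt n * ‖lam - mu‖ := by
    by_cases hsw : (∑ j, w j) = 0
    · refine gersh_aux n hn0 A lam mu v w 0 hw hsw (fun i => ?_) ?_
      · have h := congrFun hAw i
        rw [hpt w i] at h
        simp only [Pi.smul_apply, smul_eq_mul] at h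
        rw [h]
        ring
      · simp only [norm_zero, ne_eq, zero_pow, zero_mul]
        norm_num
        exact Finset.sum_nonneg fun j _ => Complex.normSq_nonneg (w j)
    · set α : ℂ := ∑ j, w j with hα
      set β : ℂ := -∑ j, v j with hβ
      set u : Fin n → ℂ := α • v + β • w with hu
      have hBu : B.mulVec u = mu • u + (α * (lam - mu)) • v := by
        rw [hu, Matrix.mulVec_add, Matrix.mulVec_smul, Matrix.mulVec_smul, hAv, hAw]
        funext j
        simp only [Pi.add_apply, Pi.smul_apply, smul_eq_mul]
        ring
      have hune : u ≠ 0 := by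
        intro h0
        have hd : dotProduct (star v) u = 0 := by rw [h0, dotProduct_zero]
        rw [hu, dotProduct_add, dotProduct_smul, dotProduct_smul,
          horth, conj_dot v, smul_eq_mul, smul_eq_mul, mul_zero, add_zero] at hd
        rcases mul_eq_zero.mp hd with h | h
        · exact hsw h
        · exact absurd (Complex.ofReal_eq_zero.mp h) (ne_of_gt (normSq_sum_pos hv))
      have hsum : ∑ j, u j = 0 := by
        simp only [hu, Pi.add_apply, Pi.smul_apply, smul_eq_mul, Finset.sum_add_distrib,
          ← Finset.mul_sum, ← hα, ← hβ]
        ring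
      have hrow : ∀ i, ∑ j, (A i j : ℂ) * u j = mu * u i + (α * (lam - mu)) * v i := by
        intro i
        have h := congrFun hBu i
        rw [hpt u i] at h
        simpa only [Pi.add_apply, Pi.smul_apply, smul_eq_mul] using h
      have hp : (‖α‖)^2 * (∑ j, Complex.normSq (v j)) ≤ ∑ j, Complex.normSq (u j) := by
        have cc : ∀ z : ℂ, (starRingEnd ℂ) z * z = (Complex.normSq z : ℂ) := fun z => by
          rw [mul_comm]; exact Complex.mul_conj z
        have hud : dotProduct (star u) u
            = (starRingEnd ℂ) α * α * dotProduct (star v) v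
              + (starRingEnd ℂ) β * β * dotProduct (star w) w := by
          rw [hu, star_add, star_smul, star_smul]
          simp only [add_dotProduct, dotProduct_add, smul_dotProduct,
            dotProduct_smul, smul_eq_mul, horth, horth', RCLike.star_def]
          ring
        rw [conj_dot u, conj_dot v, conj_dot w, cc, cc] at hud
        have hreal : (∑ j, Complex.normSq (u j))
            = Complex.normSq α * (∑ j, Complex.normSq (v j))
              + Complex.normSq β * (∑ j, Complex.normSq (w j)) := by
          exact_mod_cast hud
        have h1 : 0 ≤ Complex.normSq β * (∑ j, Complex.normSq (w j)) :=
          mul_nonneg (Complex.normSq_nonneg β)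
            (Finset.sum_nonneg fun j _ => Complex.normSq_nonneg (w j))
        rw [Complex.sq_norm]
        linarith
      exact gersh_aux n hn0 A lam mu v u α hune hsum hrow hp
  obtain ⟨i, hx⟩ := main
  refine ⟨i, ?_⟩
  rw [hr i]
  have hlb : ‖mu - (A i i : ℂ)‖ - Real.sqrt n * ‖lam - mu‖
      ≤ sInf (Set.range fun x : ℝ => |x| + ∑ j ∈ Finset.univ.erase i, |A i j - x|) := by
    apply le_csInf (Set.range_nonempty _)
    rintro b ⟨x, rfl⟩
    have := hx x
    simp only
    linarith
  linarith
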